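/- (Set-system lift preserves t-intersection) Let G be a family of subsets of [n], each of size between t and k, such that |G ∩ G'| ≥ t for all G, G' ∈ G. Form the family F' of k-element subsets of [n+k−1] by taking each G ∈ G (of size s) together with every (k−s)-element subset of the fixed k−1 extra elements {n+1,...,n+k−1}. Then F' is a t-intersecting family of k-subsets of [n+k−1] of size ∑_{G ∈ G} binomial(k−1, k−|G|). -/

import Mathlib

/-- Set-system lift preserves t-intersection. Each member `G` (of size `s`,
contained in the first `n` elements of `[n+k-1]`) is extended by every
`(k-s)`-element subset of the fixed `k-1` extra elements; the resulting family
`F'` consists of k-sets, is t-intersecting, and has size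
`∑_{G ∈ 𝒢} (k-1).choose (k - |G|)`. -/
theorem set_system_lift (n k t : ℕ) (ht : 1 ≤ t) (htk : t ≤ k) (hn : 1 ≤ n)
    (G : Finset (Finset (Fin (n + k - 1))))
    (hfirst : ∀ A ∈ G, ∀ x ∈ A, (x : ℕ) < n)
    (hcard : ∀ A ∈ G, t ≤ A.card ∧ A.card ≤ k)
    (hint : ∀ A ∈ G, ∀ B ∈ G, t ≤ (A ∩ B).card) :
    let extras : Finset (Fin (n + k - 1)) :=
      Finset.univ.filter (fun x => n ≤ (x : ℕ))
    let F' : Finset (Finset (Fin (n + k - 1))) :=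
      G.biUnion (fun A => (extras.powersetCard (k - A.card)).image (fun B => A ∪ B))
    (∀ S ∈ F', S.card = k) ∧
    (∀ S ∈ F', ∀ S' ∈ F', t ≤ (S ∩ S').card) ∧
    F'.card = ∑ A ∈ G, (k - 1).choose (k - A.card) := by
  intro extras F'
  have hk1 : 1 ≤ k := le_trans ht htk
  -- extras card
  have hext : extras.card = k - 1 := by
    have himg : extras.image (Fin.val) = Finset.Ico n (n + k - 1) := by
      ext x
      simp only [Finset.mem_image, Finset.mem_Ico, extras, Finset.mem_filter,
        Finset.mem_univ, true_and]
      constructor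
      · rintro ⟨y, hy, rfl⟩; exact ⟨hy, y.isLt⟩
      · rintro ⟨hx1, hx2⟩; exact ⟨⟨x, hx2⟩, hx1, rfl⟩
    have := Finset.card_image_of_injective extras (Fin.val_injective)
    rw [himg, Nat.card_Ico] at this
    omega
  -- membership characterization
  have hmem : ∀ S ∈ F', ∃ A ∈ G, ∃ B ⊆ extras, B.card = k - A.card ∧ S = A ∪ B := by
    intro S hS
    simp only [F', Finset.mem_biUnion, Finset.mem_image, Finset.mem_powersetCard] at hS
    obtain ⟨A, hA, B, ⟨hB1, hB2⟩, rfl⟩ := hS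
    exact ⟨A, hA, B, hB1, hB2, rfl⟩
  have hdisj : ∀ A ∈ G, ∀ B ⊆ extras, Disjoint A B := by
    intro A hA B hB
    rw [Finset.disjoint_left]
    intro x hxA hxB
    have := hfirst A hA x hxA
    have := hB hxB
    simp only [extras, Finset.mem_filter] at this
    omega
  have hcardS : ∀ S ∈ F', S.card = k := by
    intro S hS
    obtain ⟨A, hA, B, hB, hBc, rfl⟩ := hmem S hS
    rw [Finset.card_union_of_disjoint (hdisj A hA B hB), hBc]
    have := (hcard A hA).2
    omega
  refine ⟨hcardS, ?_, ?_⟩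
  · intro S hS S' hS'
    obtain ⟨A, hA, B, hB, hBc, rfl⟩ := hmem S hS
    obtain ⟨A', hA', B', hB', hBc', rfl⟩ := hmem S' hS'
    calc t ≤ (A ∩ A').card := hint A hA A' hA'
      _ ≤ ((A ∪ B) ∩ (A' ∪ B')).card := by
          apply Finset.card_le_card
          exact Finset.inter_subset_inter Finset.subset_union_left Finset.subset_union_left
  · rw [Finset.card_biUnion]
    · apply Finset.sum_congr rfl
      intro A hA
      rw [Finset.card_image_of_injOn, Finset.card_powersetCard, hext]
      intro B hB B' hB' h
      rw [Finset.mem_coe, Finset.mem_powersetCard] at hB hB'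
      have e1 : (A ∪ B) \ A = B := Finset.union_sdiff_cancel_left (hdisj A hA B hB.1)
      have e2 : (A ∪ B') \ A = B' := Finset.union_sdiff_cancel_left (hdisj A hA B' hB'.1)
      rw [← e1, ← e2]; simp only [h]
    · intro A hA A' hA' hne
      rw [Function.onFun, Finset.disjoint_left]
      intro S hS hS'
      simp only [Finset.mem_image, Finset.mem_powersetCard] at hS hS'
      obtain ⟨B, ⟨hB1, _⟩, rfl⟩ := hS
      obtain ⟨B', ⟨hB1', _⟩, hSe⟩ := hS'
      apply hne
      have key : ∀ (C : Finset (Fin (n + k - 1))), C ∈ G → ∀ D ⊆ extras,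
          Finset.filter (fun x : Fin (n+k-1) => (x : ℕ) < n) (C ∪ D) = C := by
        intro C hC D hD
        ext x
        simp only [Finset.mem_filter, Finset.mem_union]
        constructor
        · rintro ⟨hx | hx, hlt⟩
          · exact hx
          · have := hD hx
            simp only [extras, Finset.mem_filter] at this
            omega
        · intro hx
          exact ⟨Or.inl hx, hfirst C hC x hx⟩
      have := key A hA B hB1
      rw [← hSe] at this
      rw [key A' hA' B' hB1'] at this
      exact this.symm
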